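/- arXiv:2508.20531 — 2 statements merged into one kernel-verified Lean document; each statement's English description precedes it below -/
import Mathlib

section
/- For any reals r̄ > 0 and X, Z > 0, the double integral ∫_{-X}^{X} ∫_{-Z}^{Z} (1 + r̄² + 2x + x² + z²)^{-3/2} dz dx equals (2/r̄)·[arctan( Z(1+X) / ( r̄·√(X² + Z² + 2X + r̄² + 1) ) ) − arctan( Z(1−X) / ( r̄·√(X² + Z² − 2X + r̄² + 1) ) )], provided 1 + r̄² + 2x + x² + z² > 0 for all x ∈ [−X, X] (e.g. assuming X < 1 or just r̄ > 0, which ensures 1 + r̄² + 2x + x² = (1+x)² + r̄² > 0). -/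
open Real intervalIntegral

lemma inner_deriv (c : ℝ) (hc : 0 < c) (z : ℝ) :
    HasDerivAt (fun z => z / (c * Real.sqrt (c + z ^ 2)))
      ((c + z ^ 2) ^ (-(3 : ℝ) / 2)) z := by
  have hcz : 0 < c + z ^ 2 := by positivity
  have hs : 0 < Real.sqrt (c + z ^ 2) := Real.sqrt_pos.2 hcz
  have hsq : Real.sqrt (c + z ^ 2) ^ 2 = c + z ^ 2 := Real.sq_sqrt hcz.le
  have h1 : HasDerivAt (fun z : ℝ => c + z ^ 2) (2 * z) z := by
    simpa using (hasDerivAt_pow 2 z).const_add c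
  have hS : HasDerivAt (fun z => Real.sqrt (c + z ^ 2)) (z / Real.sqrt (c + z ^ 2)) z := by
    have := (Real.hasDerivAt_sqrt hcz.ne').comp z h1
    convert this using 1
    · rfl
    · rfl
    · rfl
    field_simp
  have hden : HasDerivAt (fun z => c * Real.sqrt (c + z ^ 2))
      (c * (z / Real.sqrt (c + z ^ 2))) z := hS.const_mul c
  have hdne : c * Real.sqrt (c + z ^ 2) ≠ 0 := by positivity
  have hq := (hasDerivAt_id z).div hden hdne
  convert hq using 1
  · rfl
  · rfl
  · rfl
  have hrw : (c + z ^ 2) ^ (-(3 : ℝ) / 2) = ((c + z ^ 2) * Real.sqrt (c + z ^ 2))⁻¹ := by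
    rw [show (-(3:ℝ)/2) = -((3:ℝ)/2) by norm_num, Real.rpow_neg hcz.le]
    congr 1
    rw [show (3:ℝ)/2 = 1 + 1/2 by norm_num, Real.rpow_add hcz, Real.rpow_one,
      Real.sqrt_eq_rpow]
  rw [hrw]
  rw [eq_div_iff (by positivity)]
  field_simp
  simp only [id]
  linear_combination (-z ^ 2) * hsq

lemma outer_deriv (r Z : ℝ) (hr : 0 < r) (x : ℝ) :
    HasDerivAt (fun x => (2 / r) *
        Real.arctan (Z * (1 + x) / (r * Real.sqrt ((1 + x) ^ 2 + r ^ 2 + Z ^ 2))))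
      (2 * Z / (((1 + x) ^ 2 + r ^ 2) * Real.sqrt ((1 + x) ^ 2 + r ^ 2 + Z ^ 2))) x := by
  have hb : 0 < (1 + x) ^ 2 + r ^ 2 + Z ^ 2 := by positivity
  have hs : 0 < Real.sqrt ((1 + x) ^ 2 + r ^ 2 + Z ^ 2) := Real.sqrt_pos.2 hb
  have hsq : Real.sqrt ((1 + x) ^ 2 + r ^ 2 + Z ^ 2) ^ 2 = (1 + x) ^ 2 + r ^ 2 + Z ^ 2 :=
    Real.sq_sqrt hb.le
  set s := Real.sqrt ((1 + x) ^ 2 + r ^ 2 + Z ^ 2) with hsdef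
  have h1 : HasDerivAt (fun x : ℝ => (1 + x) ^ 2 + r ^ 2 + Z ^ 2) (2 * (1 + x)) x := by
    have : HasDerivAt (fun x : ℝ => (1 + x)) 1 x := by
      simpa using (hasDerivAt_id x).const_add 1
    simpa using ((this.pow 2).add_const (r ^ 2)).add_const (Z ^ 2)
  have hS : HasDerivAt (fun x => Real.sqrt ((1 + x) ^ 2 + r ^ 2 + Z ^ 2)) ((1 + x) / s) x := by
    have := (Real.hasDerivAt_sqrt hb.ne').comp x h1
    convert this using 1
    · rfl
    · rfl
    · rfl
    field_simp
    ring
  have hnum : HasDerivAt (fun x : ℝ => Z * (1 + x)) Z x := by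
    have : HasDerivAt (fun x : ℝ => (1 + x)) 1 x := by
      simpa using (hasDerivAt_id x).const_add 1
    simpa using this.const_mul Z
  have hden : HasDerivAt (fun x => r * Real.sqrt ((1 + x) ^ 2 + r ^ 2 + Z ^ 2))
      (r * ((1 + x) / s)) x := hS.const_mul r
  have hdne : r * s ≠ 0 := by positivity
  have hf : HasDerivAt (fun x => Z * (1 + x) / (r * Real.sqrt ((1 + x) ^ 2 + r ^ 2 + Z ^ 2)))
      ((Z * (r * s) - Z * (1 + x) * (r * ((1 + x) / s))) / (r * s) ^ 2) x :=
    hnum.div hden hdne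
  have ha := (Real.hasDerivAt_arctan (Z * (1 + x) / (r * s))).comp x hf
  have := ha.const_mul (2 / r)
  convert this using 1
  · rfl
  · rfl
  · rfl
  field_simp
  linear_combination (-Z * (1 + x) ^ 2) * hsq

/-- Closed-form evaluation of the projected-aperture near-field channel gain integral
(Lemma 1 of the paper):
`∫_{-X}^{X} ∫_{-Z}^{Z} (1 + r̄² + 2x + x² + z²)^{-3/2} dz dx
  = (2/r̄)·[arctan(Z(1+X)/(r̄√(X²+Z²+2X+r̄²+1))) − arctan(Z(1−X)/(r̄√(X²+Z²−2X+r̄²+1)))]`. -/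
theorem stmt1 (r X Z : ℝ) (hr : 0 < r) (hX : 0 < X) (hZ : 0 < Z) :
    (∫ x in (-X)..X, ∫ z in (-Z)..Z, (1 + r ^ 2 + 2 * x + x ^ 2 + z ^ 2) ^ (-(3 : ℝ) / 2)) =
      (2 / r) *
        (Real.arctan (Z * (1 + X) / (r * Real.sqrt (X ^ 2 + Z ^ 2 + 2 * X + r ^ 2 + 1))) -
         Real.arctan (Z * (1 - X) / (r * Real.sqrt (X ^ 2 + Z ^ 2 - 2 * X + r ^ 2 + 1)))) := by
  have key : ∀ x : ℝ, (∫ z in (-Z)..Z, (1 + r ^ 2 + 2 * x + x ^ 2 + z ^ 2) ^ (-(3 : ℝ) / 2)) =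
      2 * Z / (((1 + x) ^ 2 + r ^ 2) * Real.sqrt ((1 + x) ^ 2 + r ^ 2 + Z ^ 2)) := by
    intro x
    have hc : 0 < (1 + x) ^ 2 + r ^ 2 := by positivity
    set c := (1 + x) ^ 2 + r ^ 2 with hcdef
    have hrw : ∀ z : ℝ, 1 + r ^ 2 + 2 * x + x ^ 2 + z ^ 2 = c + z ^ 2 := by
      intro z; rw [hcdef]; ring
    simp_rw [hrw]
    have hint : IntervalIntegrable (fun z => (c + z ^ 2) ^ (-(3 : ℝ) / 2)) MeasureTheory.volume (-Z) Z := by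
      apply Continuous.intervalIntegrable
      exact (continuous_const.add (continuous_pow 2)).rpow_const
        (fun z => Or.inl (add_pos_of_pos_of_nonneg hc (sq_nonneg z)).ne')
    rw [intervalIntegral.integral_eq_sub_of_hasDerivAt (fun z _ => inner_deriv c hc z) hint]
    have hcz : 0 < c + Z ^ 2 := by positivity
    rw [neg_pow]
    simp
    ring
  simp_rw [key]
  have hint : IntervalIntegrable
      (fun x => 2 * Z / (((1 + x) ^ 2 + r ^ 2) * Real.sqrt ((1 + x) ^ 2 + r ^ 2 + Z ^ 2)))
      MeasureTheory.volume (-X) X := by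
    apply Continuous.intervalIntegrable
    apply continuous_const.div
    · exact (((continuous_const.add continuous_id).pow 2).add continuous_const).mul
        (Real.continuous_sqrt.comp
          ((((continuous_const.add continuous_id).pow 2).add continuous_const).add continuous_const))
    · intro x
      positivity
  rw [intervalIntegral.integral_eq_sub_of_hasDerivAt (fun x _ => outer_deriv r Z hr x) hint]
  have e1 : (1 + X) ^ 2 + r ^ 2 + Z ^ 2 = X ^ 2 + Z ^ 2 + 2 * X + r ^ 2 + 1 := by ring
  have e2 : (1 + -X) ^ 2 + r ^ 2 + Z ^ 2 = X ^ 2 + Z ^ 2 - 2 * X + r ^ 2 + 1 := by ring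
  have e3 : Z * (1 + -X) = Z * (1 - X) := by ring
  rw [e1, e2, e3]
  ring
end

section
/- Let r̄ > 0 and ε > 0. The function G(X, Z) = arctan( Z(1+X) / ( r̄·√((1+X)² + r̄² + Z²) ) ) − arctan( Z(1−X) / ( r̄·√((1−X)² + r̄² + Z²) ) ) is strictly monotonically increasing in each of X > 0 and Z > 0 separately. -/
open Real

lemma mono_aux {c : ℝ} (hc : 0 < c) {a b : ℝ} (hab : a < b) :
    a / Real.sqrt (a ^ 2 + c) < b / Real.sqrt (b ^ 2 + c) := by
  have ha0 : (0:ℝ) < a ^ 2 + c := by positivity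
  have hb0 : (0:ℝ) < b ^ 2 + c := by positivity
  have hsa : 0 < Real.sqrt (a ^ 2 + c) := Real.sqrt_pos.mpr ha0
  have hsb : 0 < Real.sqrt (b ^ 2 + c) := Real.sqrt_pos.mpr hb0
  have hsa2 : Real.sqrt (a ^ 2 + c) ^ 2 = a ^ 2 + c := Real.sq_sqrt ha0.le
  have hsb2 : Real.sqrt (b ^ 2 + c) ^ 2 = b ^ 2 + c := Real.sq_sqrt hb0.le
  rw [div_lt_div_iff₀ hsa hsb]
  rcases le_or_gt 0 a with ha | ha
  · have hb : 0 < b := lt_of_le_of_lt ha hab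
    have h2 : (a * Real.sqrt (b ^ 2 + c)) ^ 2 < (b * Real.sqrt (a ^ 2 + c)) ^ 2 := by
      have hab2 : a ^ 2 < b ^ 2 := by nlinarith
      nlinarith [hsa2, hsb2]
    exact lt_of_pow_lt_pow_left₀ 2 (by positivity) h2
  · rcases lt_or_ge 0 b with hb | hb
    · have h1 : a * Real.sqrt (b ^ 2 + c) < 0 := mul_neg_of_neg_of_pos ha hsb
      have h2 : 0 < b * Real.sqrt (a ^ 2 + c) := by positivity
      linarith
    · -- a < b ≤ 0
      have hab2 : b ^ 2 < a ^ 2 := by nlinarith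
      have hsum : a * Real.sqrt (b ^ 2 + c) + b * Real.sqrt (a ^ 2 + c) < 0 := by
        nlinarith [mul_neg_of_neg_of_pos ha hsb, mul_nonpos_of_nonpos_of_nonneg hb hsa.le]
      have hprod : 0 < (b * Real.sqrt (a ^ 2 + c) - a * Real.sqrt (b ^ 2 + c)) *
          (-(a * Real.sqrt (b ^ 2 + c) + b * Real.sqrt (a ^ 2 + c))) := by
        nlinarith [hsa2, hsb2]
      nlinarith [hprod, hsum]

lemma arg_lt {r Z a b : ℝ} (hr : 0 < r) (hZ : 0 < Z) (hab : a < b) :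
    Z * a / (r * Real.sqrt (a ^ 2 + r ^ 2 + Z ^ 2)) <
      Z * b / (r * Real.sqrt (b ^ 2 + r ^ 2 + Z ^ 2)) := by
  have ea : a ^ 2 + r ^ 2 + Z ^ 2 = a ^ 2 + (r ^ 2 + Z ^ 2) := by ring
  have eb : b ^ 2 + r ^ 2 + Z ^ 2 = b ^ 2 + (r ^ 2 + Z ^ 2) := by ring
  rw [ea, eb]
  have h := mono_aux (c := r ^ 2 + Z ^ 2) (by positivity) hab
  have e1 : Z * a / (r * Real.sqrt (a ^ 2 + (r ^ 2 + Z ^ 2)))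
      = (Z / r) * (a / Real.sqrt (a ^ 2 + (r ^ 2 + Z ^ 2))) := by ring
  have e2 : Z * b / (r * Real.sqrt (b ^ 2 + (r ^ 2 + Z ^ 2)))
      = (Z / r) * (b / Real.sqrt (b ^ 2 + (r ^ 2 + Z ^ 2))) := by ring
  rw [e1, e2]
  exact mul_lt_mul_of_pos_left h (div_pos hZ hr)

lemma hasDerivAt_F {r : ℝ} (hr : 0 < r) (a Z : ℝ) :
    HasDerivAt (fun z : ℝ => Real.arctan (z * a / (r * Real.sqrt (a ^ 2 + r ^ 2 + z ^ 2))))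
      (a * r / ((r ^ 2 + Z ^ 2) * Real.sqrt (a ^ 2 + r ^ 2 + Z ^ 2))) Z := by
  have hc : 0 < a ^ 2 + r ^ 2 := by positivity
  have hcz : 0 < a ^ 2 + r ^ 2 + Z ^ 2 := by positivity
  set s := Real.sqrt (a ^ 2 + r ^ 2 + Z ^ 2) with hs
  have hspos : 0 < s := Real.sqrt_pos.mpr hcz
  have hs2 : s ^ 2 = a ^ 2 + r ^ 2 + Z ^ 2 := Real.sq_sqrt hcz.le
  have hpoly : HasDerivAt (fun z : ℝ => a ^ 2 + r ^ 2 + z ^ 2) (2 * Z) Z := by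
    simpa using ((hasDerivAt_pow 2 Z).const_add (a ^ 2 + r ^ 2))
  have hsqrt : HasDerivAt (fun z : ℝ => Real.sqrt (a ^ 2 + r ^ 2 + z ^ 2))
      (2 * Z / (2 * s)) Z := hpoly.sqrt (by positivity)
  have hden : HasDerivAt (fun z : ℝ => r * Real.sqrt (a ^ 2 + r ^ 2 + z ^ 2))
      (r * (2 * Z / (2 * s))) Z := hsqrt.const_mul r
  have hnum : HasDerivAt (fun z : ℝ => z * a) a Z := by
    simpa using (hasDerivAt_id Z).mul_const a
  have hden0 : r * s ≠ 0 := by positivity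
  have hdiv : HasDerivAt (fun z : ℝ => z * a / (r * Real.sqrt (a ^ 2 + r ^ 2 + z ^ 2)))
      ((a * (r * s) - (Z * a) * (r * (2 * Z / (2 * s)))) / (r * s) ^ 2) Z :=
    hnum.div hden hden0
  have harc := (Real.hasDerivAt_arctan (Z * a / (r * s))).comp Z hdiv
  refine HasDerivAt.congr_deriv harc ?_
  have hrs : (r:ℝ) ≠ 0 := ne_of_gt hr
  have hsne : s ≠ 0 := ne_of_gt hspos
  have hrz : (r ^ 2 + Z ^ 2) ≠ 0 := by positivity
  have hcne : (a ^ 2 + r ^ 2) ≠ 0 := ne_of_gt hc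
  have hnum_eq : a * (r * s) - Z * a * (r * (2 * Z / (2 * s))) = a * r * (a ^ 2 + r ^ 2) / s := by
    field_simp
    linear_combination a * hs2
  have key : 1 + (Z * a / (r * s)) ^ 2 = (a ^ 2 + r ^ 2) * (r ^ 2 + Z ^ 2) / (r * s) ^ 2 := by
    field_simp
    linear_combination r ^ 2 * hs2
  rw [hnum_eq, key]
  field_simp

/-- For `r̄ > 0` (and `ε > 0`), the function
`G(X,Z) = arctan(Z(1+X)/(r̄√((1+X)²+r̄²+Z²))) − arctan(Z(1−X)/(r̄√((1−X)²+r̄²+Z²)))`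
is strictly increasing in each of `X > 0` and `Z > 0` separately. -/
theorem stmt10 (r ε : ℝ) (hr : 0 < r) (hε : 0 < ε) :
    let G : ℝ → ℝ → ℝ := fun X Z =>
      Real.arctan (Z * (1 + X) / (r * Real.sqrt ((1 + X) ^ 2 + r ^ 2 + Z ^ 2))) -
      Real.arctan (Z * (1 - X) / (r * Real.sqrt ((1 - X) ^ 2 + r ^ 2 + Z ^ 2)))
    (∀ Z : ℝ, 0 < Z → ∀ X₁ X₂ : ℝ, 0 < X₁ → X₁ < X₂ → G X₁ Z < G X₂ Z) ∧
    (∀ X : ℝ, 0 < X → ∀ Z₁ Z₂ : ℝ, 0 < Z₁ → Z₁ < Z₂ → G X Z₁ < G X Z₂) := by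
  intro G
  constructor
  · intro Z hZ X₁ X₂ hX₁ hX
    have h1 : Real.arctan (Z * (1 + X₁) / (r * Real.sqrt ((1 + X₁) ^ 2 + r ^ 2 + Z ^ 2))) <
        Real.arctan (Z * (1 + X₂) / (r * Real.sqrt ((1 + X₂) ^ 2 + r ^ 2 + Z ^ 2))) :=
      Real.arctan_strictMono (arg_lt hr hZ (by linarith))
    have h2 : Real.arctan (Z * (1 - X₂) / (r * Real.sqrt ((1 - X₂) ^ 2 + r ^ 2 + Z ^ 2))) <
        Real.arctan (Z * (1 - X₁) / (r * Real.sqrt ((1 - X₁) ^ 2 + r ^ 2 + Z ^ 2))) :=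
      Real.arctan_strictMono (arg_lt hr hZ (by linarith))
    simp only [G]
    linarith
  · intro X hX Z₁ Z₂ hZ₁ hZ
    have hmono : StrictMono (fun Z => G X Z) := by
      apply strictMono_of_deriv_pos
      intro Z
      have hd : HasDerivAt (fun Z => G X Z)
          ((1 + X) * r / ((r ^ 2 + Z ^ 2) * Real.sqrt ((1 + X) ^ 2 + r ^ 2 + Z ^ 2)) -
           (1 - X) * r / ((r ^ 2 + Z ^ 2) * Real.sqrt ((1 - X) ^ 2 + r ^ 2 + Z ^ 2))) Z :=
        (hasDerivAt_F hr (1 + X) Z).sub (hasDerivAt_F hr (1 - X) Z)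
      rw [hd.deriv]
      have h := mono_aux (c := r ^ 2 + Z ^ 2) (by positivity) (show 1 - X < 1 + X by linarith)
      have e1 : (1 - X) * r / ((r ^ 2 + Z ^ 2) * Real.sqrt ((1 - X) ^ 2 + r ^ 2 + Z ^ 2))
          = (r / (r ^ 2 + Z ^ 2)) * ((1 - X) / Real.sqrt ((1 - X) ^ 2 + (r ^ 2 + Z ^ 2))) := by
        rw [show (1 - X) ^ 2 + r ^ 2 + Z ^ 2 = (1 - X) ^ 2 + (r ^ 2 + Z ^ 2) by ring,
          div_mul_div_comm, mul_comm r (1 - X)]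
      have e2 : (1 + X) * r / ((r ^ 2 + Z ^ 2) * Real.sqrt ((1 + X) ^ 2 + r ^ 2 + Z ^ 2))
          = (r / (r ^ 2 + Z ^ 2)) * ((1 + X) / Real.sqrt ((1 + X) ^ 2 + (r ^ 2 + Z ^ 2))) := by
        rw [show (1 + X) ^ 2 + r ^ 2 + Z ^ 2 = (1 + X) ^ 2 + (r ^ 2 + Z ^ 2) by ring,
          div_mul_div_comm, mul_comm r (1 + X)]
      rw [e1, e2, sub_pos]
      exact mul_lt_mul_of_pos_left h (by positivity)
    exact hmono hZ
end
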